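/- Let Z be a metric space and let X ⊆ Z be a compact subset with at least two points such that ∇(X) = 0. Then for every ε > 0 there exists δ > 0 such that every compact subset Y ⊆ Z with at least two points satisfying d_H(X,Y) < δ has ∇(Y) < ε. -/
import Mathlib


open Metric

namespace FinDim

variable {X : Type*} [MetricSpace X]

/-- `ν_F(a)`: the distance from `a` to a nearest other point of `F`. -/
noncomputable def nu (F : Finset X) (a : X) : ℝ :=
  sInf {r : ℝ | ∃ x ∈ F, x ≠ a ∧ r = dist a x}

/-- `δ(F)`: the separation of `F`, the minimum distance between distinct points. -/
noncomputable def sep (F : Finset X) : ℝ :=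
  sInf {r : ℝ | ∃ x ∈ F, ∃ y ∈ F, x ≠ y ∧ r = dist x y}

/-- A 2-covering of `F`: a family of subsets of `F` covering `F`,
each member having at least two elements. -/
def IsTwoCover (F : Finset X) (U : Finset (Finset X)) : Prop :=
  (∀ V ∈ U, V ⊆ F) ∧ (∀ V ∈ U, 2 ≤ V.card) ∧ ∀ a ∈ F, ∃ V ∈ U, a ∈ V

/-- `Δ(𝒰)`: maximum diameter of the members of the family `𝒰`. -/
noncomputable def coverDiam (U : Finset (Finset X)) : ℝ :=
  sSup {r : ℝ | ∃ V ∈ U, r = Metric.diam (V : Set X)}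

/-- `∇(F)`: the covering diameter of `F`. -/
noncomputable def nablaF (F : Finset X) : ℝ :=
  sInf {r : ℝ | ∃ U : Finset (Finset X), IsTwoCover F U ∧ r = coverDiam U}

/-- `a` is a focal point of `F`. -/
def IsFocal (F : Finset X) (a : X) : Prop :=
  a ∈ F ∧ ∀ x ∈ F, x ≠ a → dist a x = Metric.diam (F : Set X)

/-- `H^s_𝒰(F) = Σ_{U ∈ 𝒰} Δ(U)^s`. -/
noncomputable def Hcov (U : Finset (Finset X)) (s : ℝ) : ℝ :=
  ∑ V ∈ U, Metric.diam (V : Set X) ^ s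

/-- `H^s(F)`: minimum of `H^s_𝒰(F)` over 2-coverings `𝒰` with `Δ(𝒰) = ∇(F)`. -/
noncomputable def HH (F : Finset X) (s : ℝ) : ℝ :=
  sInf {h : ℝ | ∃ U : Finset (Finset X),
    IsTwoCover F U ∧ coverDiam U = nablaF F ∧ h = Hcov U s}

/-- The finite Hausdorff dimension: the unique `s₀ ∈ (0,∞)` with
`H^{s₀}(F) = Δ(F)^{s₀}` (when `F` has no focal points). -/
noncomputable def dimfH (F : Finset X) : ℝ :=
  sInf {s : ℝ | 0 < s ∧ HH F s = Metric.diam (F : Set X) ^ s}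

/-- `T_{∇(F)}(F)`: the minimal cardinality of a 2-covering `𝒰` with `Δ(𝒰) = ∇(F)`. -/
noncomputable def Tmin (F : Finset X) : ℕ :=
  sInf {n : ℕ | ∃ U : Finset (Finset X),
    IsTwoCover F U ∧ coverDiam U = nablaF F ∧ U.card = n}

/-- The finite box dimension `dim_fB(F) = ln T_{∇(F)}(F) / ln (Δ(F)/∇(F))`. -/
noncomputable def dimfB (F : Finset X) : ℝ :=
  Real.log (Tmin F) / Real.log (Metric.diam (F : Set X) / nablaF F)

/-- `ν_A(x)` for a subset `A` of a metric space. -/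
noncomputable def nuSet {Z : Type*} [MetricSpace Z] (A : Set Z) (x : Z) : ℝ :=
  sInf {r : ℝ | ∃ y ∈ A, y ≠ x ∧ r = dist x y}

/-- `∇(A) = sup {ν_A(x) : x ∈ A}` for a subset `A` of a metric space. -/
noncomputable def nablaSet {Z : Type*} [MetricSpace Z] (A : Set Z) : ℝ :=
  sSup {r : ℝ | ∃ x ∈ A, r = nuSet A x}

end FinDim

open FinDim in
/-- If `X` is compact with `∇(X) = 0`, then compact sets Hausdorff-close to `X`
have small `∇`. -/
theorem stmt15 {Z : Type*} [MetricSpace Z] (X : Set Z) (hX : IsCompact X)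
    (hX2 : ∃ x ∈ X, ∃ y ∈ X, x ≠ y) (hnab : nablaSet X = 0) :
    ∀ ε > 0, ∃ δ > 0, ∀ Y : Set Z, IsCompact Y → (∃ x ∈ Y, ∃ y ∈ Y, x ≠ y) →
      Metric.hausdorffDist X Y < δ → nablaSet Y < ε := by
  intro ε hε
  obtain ⟨a, haX, b, hbX, hab⟩ := hX2
  have hXne : X.Nonempty := ⟨a, haX⟩
  have hbdd : Bornology.IsBounded X := hX.isBounded
  set r : ℝ := ε / 8 with hrdef
  have hr0 : 0 < r := by positivity
  -- the defining set of nuSet is nonempty and bounded below for points of X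
  have hSne : ∀ x : Z, {s : ℝ | ∃ y ∈ X, y ≠ x ∧ s = dist x y}.Nonempty := by
    intro x
    rcases eq_or_ne a x with h | h
    · exact ⟨dist x b, b, hbX, by rw [← h]; exact hab.symm, rfl⟩
    · exact ⟨dist x a, a, haX, h, rfl⟩
  have hSbl : ∀ x : Z, BddBelow {s : ℝ | ∃ y ∈ X, y ≠ x ∧ s = dist x y} := by
    intro x
    exact ⟨0, by rintro s ⟨y, _, _, rfl⟩; exact dist_nonneg⟩
  -- every point of X has nuSet X x = 0
  have hnu : ∀ x ∈ X, nuSet X x = 0 := by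
    intro x hx
    have h1 : 0 ≤ nuSet X x := le_csInf (hSne x) (by rintro s ⟨y, _, _, rfl⟩; exact dist_nonneg)
    have h2 : nuSet X x ≤ nablaSet X := by
      apply le_csSup
      · refine ⟨Metric.diam X, ?_⟩
        rintro s ⟨x', hx', rfl⟩
        obtain ⟨s', y, hyX, hyne, rfl⟩ := hSne x'
        exact le_trans (csInf_le (hSbl x') ⟨y, hyX, hyne, rfl⟩)
          (Metric.dist_le_diam_of_mem hbdd hx' hyX)
      · exact ⟨x, hx, rfl⟩
    rw [hnab] at h2
    linarith
  -- points of X have other points of X arbitrarily close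
  have hclose : ∀ x ∈ X, ∀ t : ℝ, 0 < t → ∃ y ∈ X, y ≠ x ∧ dist x y < t := by
    intro x hx t ht
    have : sInf {s : ℝ | ∃ y ∈ X, y ≠ x ∧ s = dist x y} < t := by
      rw [show sInf {s : ℝ | ∃ y ∈ X, y ≠ x ∧ s = dist x y} = nuSet X x from rfl, hnu x hx]
      exact ht
    obtain ⟨s, hs, hst⟩ := (csInf_lt_iff (hSbl x) (hSne x)).1 this
    obtain ⟨y, hyX, hyne, rfl⟩ := hs
    exact ⟨y, hyX, hyne, hst⟩
  -- two distinct points of X near each point of X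
  have htwo : ∀ x ∈ X, ∃ p q : Z, p ∈ X ∧ q ∈ X ∧ p ≠ q ∧ dist x p < r ∧ dist x q < r := by
    intro x hx
    obtain ⟨p, hpX, hpx, hdp⟩ := hclose x hx (r / 2) (by positivity)
    obtain ⟨q, hqX, hqp, hdq⟩ := hclose p hpX (r / 2) (by positivity)
    refine ⟨p, q, hpX, hqX, fun h => hqp h.symm, by linarith, ?_⟩
    calc dist x q ≤ dist x p + dist p q := dist_triangle x p q
      _ < r := by linarith
  choose! p q hpX hqX hpq hdp hdq using htwo
  -- finite subcover by balls of radius r centered in X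
  obtain ⟨b', hb'X, hb'fin, hb'cov⟩ := hX.elim_finite_subcover_image
    (b := X) (c := fun x => Metric.ball x r) (fun i _ => Metric.isOpen_ball)
    (fun x hx => Set.mem_biUnion hx (Metric.mem_ball_self hr0))
  have hb'ne : b'.Nonempty := by
    rcases Set.eq_empty_or_nonempty b' with h | h
    · exfalso
      have := hb'cov haX
      simp [h] at this
    · exact h
  set F : Finset Z := hb'fin.toFinset with hF
  have hFne : F.Nonempty := by
    obtain ⟨i, hi⟩ := hb'ne
    exact ⟨i, hb'fin.mem_toFinset.2 hi⟩
  set δ : ℝ := min r (F.inf' hFne fun i => dist (p i) (q i) / 2) with hδdef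
  have hδr : δ ≤ r := min_le_left _ _
  have hδ0 : 0 < δ := by
    refine lt_min hr0 ((Finset.lt_inf'_iff _).2 fun i hi => ?_)
    have hiX : i ∈ X := hb'X (hb'fin.mem_toFinset.1 hi)
    have := hpq i hiX
    have : 0 < dist (p i) (q i) := dist_pos.2 this
    linarith
  refine ⟨δ, hδ0, fun Y hYc hY2 hYd => ?_⟩
  obtain ⟨c, hcY, _, _, _⟩ := hY2
  have hYne : Y.Nonempty := ⟨c, hcY⟩
  have hfin := Metric.hausdorffEdist_ne_top_of_nonempty_of_bounded hXne hYne hbdd hYc.isBounded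
  -- each point of Y has a distinct point of Y within ε/2
  have key : ∀ y ∈ Y, nuSet Y y ≤ ε / 2 := by
    intro y hy
    obtain ⟨x, hxX, hxy⟩ := Metric.exists_dist_lt_of_hausdorffDist_lt' hy hYd hfin
    obtain ⟨i, hib', hxi⟩ := Set.mem_iUnion₂.1 (hb'cov hxX)
    have hiX : i ∈ X := hb'X hib'
    have hiF : i ∈ F := hb'fin.mem_toFinset.2 hib'
    have hδpq : 2 * δ ≤ dist (p i) (q i) := by
      have := Finset.inf'_le (fun j => dist (p j) (q j) / 2) hiF
      have h2 : δ ≤ dist (p i) (q i) / 2 := le_trans (min_le_right _ _) this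
      linarith
    obtain ⟨yp, hypY, hyp⟩ := Metric.exists_dist_lt_of_hausdorffDist_lt (hpX i hiX) hYd hfin
    obtain ⟨yq, hyqY, hyq⟩ := Metric.exists_dist_lt_of_hausdorffDist_lt (hqX i hiX) hYd hfin
    have hne : yp ≠ yq := by
      intro h
      have : dist (p i) (q i) ≤ dist (p i) yp + dist yq (q i) := by
        rw [h]; exact dist_triangle _ _ _
      rw [dist_comm yq (q i)] at this
      linarith
    have hxi' : dist x i < r := Metric.mem_ball.1 hxi
    -- distance bounds: dist y yp and dist y yq are both < 2δ + 2r
    have hbp : dist y yp < 2 * δ + 2 * r := by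
      calc dist y yp ≤ dist y x + dist x i + dist i (p i) + dist (p i) yp := by
            have := dist_triangle4 y x (p i) yp
            have h2 := dist_triangle x i (p i)
            linarith
        _ < δ + r + r + δ := by
            have := hdp i hiX
            rw [dist_comm y x] at *
            linarith
        _ = 2 * δ + 2 * r := by ring
    have hbq : dist y yq < 2 * δ + 2 * r := by
      calc dist y yq ≤ dist y x + dist x i + dist i (q i) + dist (q i) yq := by
            have := dist_triangle4 y x (q i) yq
            have h2 := dist_triangle x i (q i)
            linarith
        _ < δ + r + r + δ := by
            have := hdq i hiX
            rw [dist_comm y x] at *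
            linarith
        _ = 2 * δ + 2 * r := by ring
    have hbound : 2 * δ + 2 * r ≤ ε / 2 := by
      rw [hrdef] at *
      linarith
    -- one of yp, yq differs from y
    have : ∃ y' ∈ Y, y' ≠ y ∧ dist y y' ≤ ε / 2 := by
      rcases eq_or_ne yp y with h | h
      · exact ⟨yq, hyqY, fun hq => hne (by rw [h, hq]), le_trans hbq.le hbound⟩
      · exact ⟨yp, hypY, h, le_trans hbp.le hbound⟩
    obtain ⟨y', hy'Y, hy'ne, hy'd⟩ := this
    exact le_trans (csInf_le ⟨0, by rintro s ⟨z, _, _, rfl⟩; exact dist_nonneg⟩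
      ⟨y', hy'Y, hy'ne, rfl⟩) hy'd
  have : nablaSet Y ≤ ε / 2 := by
    apply Real.sSup_le
    · rintro s ⟨y, hy, rfl⟩
      exact key y hy
    · linarith
  linarith
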